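/- Let G, H be closed subspaces of a Hilbert space with G + H closed, F an element with ‖F‖ = 1, and c = c(G,H) = c₀(G ∩ (G∩H)^⊥, H ∩ (G∩H)^⊥) the cosine of the Friedrichs angle. Then the iterates Fⁿ of the iterative model combination algorithm satisfy ‖Fⁿ − P_{G⊕H}(F)‖ ≤ c^{2n−1} for all n ≥ 1. -/

import Mathlib

noncomputable def proj {E : Type*} [NormedAddCommGroup E] [InnerProductSpace ℝ E]
    (K : Submodule ℝ E) [CompleteSpace K] : E →L[ℝ] E :=
  K.subtypeL.comp K.orthogonalProjection


noncomputable def cos0 {E : Type*} [NormedAddCommGroup E] [InnerProductSpace ℝ E]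
    (A B : Submodule ℝ E) : ℝ :=
  sSup {r : ℝ | ∃ g ∈ A, ∃ h ∈ B, ‖g‖ ≤ 1 ∧ ‖h‖ ≤ 1 ∧ r = |(inner ℝ g h : ℝ)|}

open RealInnerProductSpace

section Aux

variable {E : Type*} [NormedAddCommGroup E] [InnerProductSpace ℝ E]

lemma proj_mem (K : Submodule ℝ E) [CompleteSpace K] (x : E) : proj K x ∈ K :=
  (K.orthogonalProjection x).2

lemma sub_proj_mem_orth (K : Submodule ℝ E) [CompleteSpace K] (x : E) :
    x - proj K x ∈ Kᗮ :=
  K.sub_starProjection_mem_orthogonal x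

lemma proj_eq_self (K : Submodule ℝ E) [CompleteSpace K] {x : E} (hx : x ∈ K) :
    proj K x = x :=
  Submodule.starProjection_eq_self_iff.mpr hx

lemma proj_eq_zero (K : Submodule ℝ E) [CompleteSpace K] {x : E} (hx : x ∈ Kᗮ) :
    proj K x = 0 := by
  show ((K.orthogonalProjectionOnto x : K) : E) = 0
  rw [Submodule.orthogonalProjectionOnto_apply_of_mem_orthogonal hx]
  rfl

lemma proj_pyth (K : Submodule ℝ E) [CompleteSpace K] (x : E) :
    ‖x‖ ^ 2 = ‖proj K x‖ ^ 2 + ‖x - proj K x‖ ^ 2 := by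
  have hz : ⟪proj K x, x - proj K x⟫ = 0 :=
    (Submodule.mem_orthogonal _ _).mp (sub_proj_mem_orth K x) _ (proj_mem K x)
  have h := norm_add_sq_real (proj K x) (x - proj K x)
  rw [hz] at h
  have hx : proj K x + (x - proj K x) = x := by abel
  rw [hx] at h
  linarith

lemma norm_proj_le (K : Submodule ℝ E) [CompleteSpace K] (x : E) : ‖proj K x‖ ≤ ‖x‖ := by
  have h := proj_pyth K x
  nlinarith [norm_nonneg (proj K x), norm_nonneg x, sq_nonneg (‖x - proj K x‖)]

lemma norm_sub_proj_le (K : Submodule ℝ E) [CompleteSpace K] (x : E) :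
    ‖x - proj K x‖ ≤ ‖x‖ := by
  have h := proj_pyth K x
  nlinarith [norm_nonneg (x - proj K x), norm_nonneg x, sq_nonneg (‖proj K x‖)]

lemma inner_proj_swap (K : Submodule ℝ E) [CompleteSpace K] (u v : E) :
    ⟪proj K u, v⟫ = ⟪u, proj K v⟫ :=
  K.inner_starProjection_left_eq_right u v

lemma cos0_bddAbove (A B : Submodule ℝ E) :
    BddAbove {r : ℝ | ∃ g ∈ A, ∃ h ∈ B, ‖g‖ ≤ 1 ∧ ‖h‖ ≤ 1 ∧ r = |(inner ℝ g h : ℝ)|} := by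
  refine ⟨1, fun r hr => ?_⟩
  obtain ⟨g, _, h, _, hg1, hh1, rfl⟩ := hr
  calc |(inner ℝ g h : ℝ)| ≤ ‖g‖ * ‖h‖ := abs_real_inner_le_norm g h
    _ ≤ 1 := by nlinarith [norm_nonneg g, norm_nonneg h]

lemma cos0_zero_mem (A B : Submodule ℝ E) :
    (0:ℝ) ∈ {r : ℝ | ∃ g ∈ A, ∃ h ∈ B, ‖g‖ ≤ 1 ∧ ‖h‖ ≤ 1 ∧ r = |(inner ℝ g h : ℝ)|} :=
  ⟨0, A.zero_mem, 0, B.zero_mem, by simp, by simp, by simp⟩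

lemma cos0_nonneg (A B : Submodule ℝ E) : 0 ≤ cos0 A B :=
  le_csSup (cos0_bddAbove A B) (cos0_zero_mem A B)

lemma cos0_le_one (A B : Submodule ℝ E) : cos0 A B ≤ 1 := by
  refine csSup_le ⟨0, cos0_zero_mem A B⟩ fun r hr => ?_
  obtain ⟨g, _, h, _, hg1, hh1, rfl⟩ := hr
  calc |(inner ℝ g h : ℝ)| ≤ ‖g‖ * ‖h‖ := abs_real_inner_le_norm g h
    _ ≤ 1 := by nlinarith [norm_nonneg g, norm_nonneg h]

lemma cos0_pair_bound (A B : Submodule ℝ E) {g h : E} (hg : g ∈ A) (hh : h ∈ B) :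
    |⟪g, h⟫| ≤ cos0 A B * ‖g‖ * ‖h‖ := by
  rcases eq_or_ne g 0 with rfl | hg0
  · simp
  rcases eq_or_ne h 0 with rfl | hh0
  · simp
  have hgn : (0:ℝ) < ‖g‖ := norm_pos_iff.mpr hg0
  have hhn : (0:ℝ) < ‖h‖ := norm_pos_iff.mpr hh0
  have hmem : |⟪‖g‖⁻¹ • g, ‖h‖⁻¹ • h⟫| ∈
      {r : ℝ | ∃ g ∈ A, ∃ h ∈ B, ‖g‖ ≤ 1 ∧ ‖h‖ ≤ 1 ∧ r = |(inner ℝ g h : ℝ)|} := by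
    refine ⟨‖g‖⁻¹ • g, A.smul_mem _ hg, ‖h‖⁻¹ • h, B.smul_mem _ hh, ?_, ?_, rfl⟩
    · rw [norm_smul, norm_inv, norm_norm, inv_mul_cancel₀ hgn.ne']
    · rw [norm_smul, norm_inv, norm_norm, inv_mul_cancel₀ hhn.ne']
  have hle : |⟪‖g‖⁻¹ • g, ‖h‖⁻¹ • h⟫| ≤ cos0 A B := le_csSup (cos0_bddAbove A B) hmem
  have heq : |⟪‖g‖⁻¹ • g, ‖h‖⁻¹ • h⟫| = ‖g‖⁻¹ * ‖h‖⁻¹ * |⟪g, h⟫| := by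
    rw [real_inner_smul_left, real_inner_smul_right, abs_mul, abs_mul,
      abs_of_nonneg (inv_nonneg.mpr hgn.le), abs_of_nonneg (inv_nonneg.mpr hhn.le)]
    ring
  rw [heq] at hle
  have := mul_le_mul_of_nonneg_left hle (mul_pos hgn hhn).le
  calc |⟪g, h⟫| = ‖g‖ * ‖h‖ * (‖g‖⁻¹ * ‖h‖⁻¹ * |⟪g, h⟫|) := by
        field_simp
    _ ≤ ‖g‖ * ‖h‖ * cos0 A B := this
    _ = cos0 A B * ‖g‖ * ‖h‖ := by ring

end Aux


lemma quad_ineq (c gn hn pn an dn : ℝ) (hgn : 0 ≤ gn) (hhn0 : 0 ≤ hn) (hpn : 0 ≤ pn)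
    (hdn : 0 ≤ dn) (hc0 : 0 ≤ c) (han : 0 ≤ an)
    (f1 : gn ^ 2 ≤ c * gn * hn) (f2 : gn ^ 2 ≤ pn * hn)
    (f3 : an ^ 2 = hn ^ 2 - gn ^ 2) (f5 : dn ^ 2 = gn ^ 2 - pn ^ 2) :
    dn ≤ c * an := by
  have hca : 0 ≤ c * an := mul_nonneg hc0 han
  rcases eq_or_lt_of_le hgn with h0 | hgn'
  · have hdn0 : dn = 0 := by nlinarith [sq_nonneg pn, sq_nonneg dn]
    rw [hdn0]; exact hca
  · have hA : gn ≤ c * hn := by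
      have := mul_le_mul_of_nonneg_left (le_refl gn) hgn
      nlinarith
    have hhn : 0 < hn := by nlinarith
    have h6 : 0 ≤ hn ^ 2 - gn ^ 2 := by nlinarith [sq_nonneg an]
    have h7 : 0 ≤ c ^ 2 * hn ^ 2 - gn ^ 2 := by nlinarith
    have h8 : gn ^ 2 * gn ^ 2 ≤ pn ^ 2 * hn ^ 2 := by nlinarith
    have h9 : 0 ≤ (hn ^ 2 - gn ^ 2) * (c ^ 2 * hn ^ 2 - gn ^ 2) := mul_nonneg h6 h7
    have hD : 0 ≤ (c ^ 2 * (hn ^ 2 - gn ^ 2) - (gn ^ 2 - pn ^ 2)) * hn ^ 2 := by nlinarith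
    have hhn2 : (0 : ℝ) < hn ^ 2 := by positivity
    have hD' : 0 ≤ c ^ 2 * (hn ^ 2 - gn ^ 2) - (gn ^ 2 - pn ^ 2) :=
      nonneg_of_mul_nonneg_left hD hhn2
    have hsq : dn ^ 2 ≤ (c * an) ^ 2 := by
      rw [f5, mul_pow, f3]; linarith
    exact (abs_le_of_sq_le_sq' hsq hca).2

section Step

variable {E : Type*} [NormedAddCommGroup E] [InnerProductSpace ℝ E] [CompleteSpace E]

lemma step (G H : Submodule ℝ E) [CompleteSpace G] [CompleteSpace H]
    (c : ℝ) (hc0 : 0 ≤ c)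
    (hcb : ∀ g ∈ G ⊓ (G ⊓ H)ᗮ, ∀ h ∈ H ⊓ (G ⊓ H)ᗮ, |⟪g, h⟫| ≤ c * ‖g‖ * ‖h‖)
    {a : E} (haG : a ∈ Gᗮ) (haM : a ∈ G ⊔ H) :
    ‖a - proj H a‖ ≤ c * ‖a‖ := by
  haveI : CompleteSpace ↥(G ⊓ H) := by
    have hcl : IsClosed ((G ⊓ H : Submodule ℝ E) : Set E) := by
      rw [Submodule.coe_inf]
      exact ((completeSpace_coe_iff_isComplete.mp ‹CompleteSpace G›).isClosed).inter
        ((completeSpace_coe_iff_isComplete.mp ‹CompleteSpace H›).isClosed)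
    exact hcl.completeSpace_coe
  set N := G ⊓ H with hN
  obtain ⟨g₁, hg₁, h₁, hh₁, hsum⟩ := Submodule.mem_sup.mp haM
  set h : E := h₁ - proj N h₁ with hdefh
  have hhH : h ∈ H := sub_mem hh₁ (inf_le_right (a := G) (proj_mem N h₁))
  have hhN : h ∈ Nᗮ := sub_proj_mem_orth N h₁
  have hprojNG : proj N h₁ ∈ G := inf_le_left (b := H) (proj_mem N h₁)
  have key : a = h - proj G h := by
    have h1 : proj G a = 0 := proj_eq_zero G haG
    have h2 : proj G h = proj G h₁ - proj N h₁ := by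
      rw [hdefh, map_sub, proj_eq_self G hprojNG]
    have h3 : proj G a = g₁ + proj G h₁ := by
      rw [← hsum, map_add, proj_eq_self G hg₁]
    have h4 : g₁ = -proj G h₁ := by
      rw [h1] at h3
      exact eq_neg_of_add_eq_zero_left h3.symm
    rw [← hsum, h4, h2, hdefh]; abel
  set g : E := proj G h with hdefg
  have hgG : g ∈ G := proj_mem G h
  have hgN : g ∈ Nᗮ := by
    intro v hv
    have hv' : v ∈ G := inf_le_left (b := H) hv
    have : ⟪proj G v, h⟫ = ⟪v, proj G h⟫ := inner_proj_swap G v h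
    rw [proj_eq_self G hv'] at this
    rw [← this]
    exact hhN v hv
  have hga : ⟪g, a⟫ = 0 := haG g hgG
  have hha : h = g + a := by rw [key]; abel
  have hgh : ⟪g, h⟫ = ‖g‖ ^ 2 := by
    rw [hha, inner_add_right, hga, add_zero, real_inner_self_eq_norm_sq]
  have hb1 : |⟪g, h⟫| ≤ c * ‖g‖ * ‖h‖ := hcb g ⟨hgG, hgN⟩ h ⟨hhH, hhN⟩
  have f1 : ‖g‖ ^ 2 ≤ c * ‖g‖ * ‖h‖ := by
    rw [← hgh]; exact (le_abs_self _).trans hb1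
  set p : E := proj H g with hdefp
  have f2 : ‖g‖ ^ 2 ≤ ‖p‖ * ‖h‖ := by
    have hswap : ⟪p, h⟫ = ⟪g, h⟫ := by
      rw [hdefp, inner_proj_swap H g h, proj_eq_self H hhH]
    calc ‖g‖ ^ 2 = ⟪p, h⟫ := by rw [hswap, hgh]
      _ ≤ ‖p‖ * ‖h‖ := real_inner_le_norm p h
  have f3 : ‖a‖ ^ 2 = ‖h‖ ^ 2 - ‖g‖ ^ 2 := by
    have := proj_pyth G h
    rw [← hdefg, ← key] at this
    linarith
  have f4 : ‖a - proj H a‖ = ‖g - p‖ := by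
    have : a - proj H a = -(g - p) := by
      rw [key, map_sub, proj_eq_self H hhH, hdefp]; abel
    rw [this, norm_neg]
  have f5 : ‖g - p‖ ^ 2 = ‖g‖ ^ 2 - ‖p‖ ^ 2 := by
    have := proj_pyth H g
    rw [← hdefp] at this
    linarith
  rw [f4]
  exact quad_ineq c ‖g‖ ‖h‖ ‖p‖ ‖a‖ ‖g - p‖ (norm_nonneg g) (norm_nonneg h) (norm_nonneg p)
    (norm_nonneg (g - p)) hc0 (norm_nonneg a) f1 f2 f3 f5

end Step

theorem stmt7 {E : Type*} [NormedAddCommGroup E] [InnerProductSpace ℝ E] [CompleteSpace E]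
    (G H : Submodule ℝ E) [CompleteSpace G] [CompleteSpace H] [CompleteSpace ↥(G ⊔ H)]
    (F : E) (hF : ‖F‖ = 1) (FG FH : ℕ → E)
    (hFH0 : FH 0 = proj H F)
    (hFG : ∀ n : ℕ, FG n = proj G (F - FH n))
    (hFH : ∀ n : ℕ, FH (n + 1) = proj H (F - FG n))
    (c : ℝ) (hc : c = cos0 (G ⊓ (G ⊓ H)ᗮ) (H ⊓ (G ⊓ H)ᗮ)) :
    ∀ n : ℕ, 1 ≤ n → ‖(FG n + FH n) - proj (G ⊔ H) F‖ ≤ c ^ (2 * n - 1) := by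
  have hc0 : 0 ≤ c := hc ▸ cos0_nonneg _ _
  have hc1 : c ≤ 1 := hc ▸ cos0_le_one _ _
  -- pairing bounds
  have hcb : ∀ g ∈ G ⊓ (G ⊓ H)ᗮ, ∀ h ∈ H ⊓ (G ⊓ H)ᗮ, |⟪g, h⟫| ≤ c * ‖g‖ * ‖h‖ := by
    intro g hg h hh
    rw [hc]
    exact cos0_pair_bound _ _ hg hh
  have hcb' : ∀ h ∈ H ⊓ (H ⊓ G)ᗮ, ∀ g ∈ G ⊓ (H ⊓ G)ᗮ, |⟪h, g⟫| ≤ c * ‖h‖ * ‖g‖ := by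
    intro h hh g hg
    rw [inf_comm (a := H) (b := G)] at hh hg
    rw [real_inner_comm]
    calc |⟪g, h⟫| ≤ c * ‖g‖ * ‖h‖ := hcb g hg h hh
      _ = c * ‖h‖ * ‖g‖ := by ring
  set M := G ⊔ H with hM
  set w : E := proj M F with hw
  have hGM : G ≤ M := le_sup_left
  have hHM : H ≤ M := le_sup_right
  have hFw : F - w ∈ Mᗮ := sub_proj_mem_orth M F
  have projG_Fw : ∀ x : E, proj G (F - x) = proj G (w - x) := by
    intro x
    have hsplit : F - x = (w - x) + (F - w) := by abel
    rw [hsplit, map_add, proj_eq_zero G (Submodule.orthogonal_le hGM hFw), add_zero]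
  have projH_Fw : ∀ x : E, proj H (F - x) = proj H (w - x) := by
    intro x
    have hsplit : F - x = (w - x) + (F - w) := by abel
    rw [hsplit, map_add, proj_eq_zero H (Submodule.orthogonal_le hHM hFw), add_zero]
  have hFHmem : ∀ n, FH n ∈ H := by
    intro n
    cases n with
    | zero => rw [hFH0]; exact proj_mem H F
    | succ m => rw [hFH m]; exact proj_mem H _
  have hFGmem : ∀ n, FG n ∈ G := fun n => by rw [hFG n]; exact proj_mem G _
  have hwnorm : ‖w‖ ≤ 1 := hF ▸ norm_proj_le M F
  -- main induction
  have key : ∀ n : ℕ, (w - FG n - FH n ∈ Gᗮ) ∧ (w - FG n - FH n ∈ M) ∧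
      ‖w - FG n - FH n‖ ≤ c ^ (2 * n + 1) := by
    intro n
    induction n with
    | zero =>
      have hFH0' : FH 0 = proj H w := by
        rw [hFH0]
        have := projH_Fw 0
        simpa using this
      set y : E := w - FH 0 with hy
      have hyH : y ∈ Hᗮ := by rw [hy, hFH0']; exact sub_proj_mem_orth H w
      have hyM : y ∈ M := sub_mem (proj_mem M F) (hHM (hFHmem 0))
      have hyM' : y ∈ H ⊔ G := by rwa [sup_comm]
      have hynorm : ‖y‖ ≤ 1 := by
        have h1 : ‖y‖ ≤ ‖w‖ := by rw [hy, hFH0']; exact norm_sub_proj_le H w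
        linarith
      have hu0 : w - FG 0 - FH 0 = y - proj G y := by
        rw [hFG 0, projG_Fw]; rw [hy]; abel
      refine ⟨?_, ?_, ?_⟩
      · rw [hu0]; exact sub_proj_mem_orth G y
      · rw [hu0]; exact sub_mem hyM (hGM (proj_mem G y))
      · rw [hu0]
        calc ‖y - proj G y‖ ≤ c * ‖y‖ := step H G c hc0 hcb' hyH hyM'
          _ ≤ c * 1 := mul_le_mul_of_nonneg_left hynorm hc0
          _ = c ^ (2 * 0 + 1) := by ring
    | succ n ih =>
      obtain ⟨ihG, ihM, ihNorm⟩ := ih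
      set u : E := w - FG n - FH n with hu
      have hv : w - FG n - FH (n + 1) = u - proj H u := by
        rw [hFH n, projH_Fw]
        have h1 : w - FG n = u + FH n := by rw [hu]; abel
        rw [h1, map_add, proj_eq_self H (hFHmem n)]
        abel
      have hvH : u - proj H u ∈ Hᗮ := sub_proj_mem_orth H u
      have hvM : u - proj H u ∈ M := sub_mem ihM (hHM (proj_mem H u))
      have hvM' : u - proj H u ∈ H ⊔ G := by rwa [sup_comm]
      have hvn : ‖u - proj H u‖ ≤ c * ‖u‖ := step G H c hc0 hcb ihG ihM
      have h2 : w - FH (n + 1) = (u - proj H u) + FG n := by rw [← hv]; abel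
      have hu' : w - FG (n + 1) - FH (n + 1) = (u - proj H u) - proj G (u - proj H u) := by
        have h4 : FG (n + 1) = proj G (u - proj H u) + FG n := by
          rw [hFG (n + 1), projG_Fw, h2, map_add, proj_eq_self G (hFGmem n)]
        rw [h4, show w - (proj G (u - proj H u) + FG n) - FH (n + 1)
            = (w - FG n - FH (n + 1)) - proj G (u - proj H u) from by abel, hv]
      refine ⟨?_, ?_, ?_⟩
      · rw [hu']; exact sub_proj_mem_orth G _
      · rw [hu']; exact sub_mem hvM (hGM (proj_mem G _))
      · rw [hu']
        calc ‖(u - proj H u) - proj G (u - proj H u)‖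
            ≤ c * ‖u - proj H u‖ := step H G c hc0 hcb' hvH hvM'
          _ ≤ c * (c * ‖u‖) := mul_le_mul_of_nonneg_left hvn hc0
          _ ≤ c * (c * c ^ (2 * n + 1)) := by
              have := mul_le_mul_of_nonneg_left ihNorm hc0
              exact mul_le_mul_of_nonneg_left this hc0
          _ = c ^ (2 * (n + 1) + 1) := by ring
  intro n hn
  obtain ⟨-, -, hnorm⟩ := key n
  have hgoal : (FG n + FH n) - proj (G ⊔ H) F = -(w - FG n - FH n) := by
    show (FG n + FH n) - w = -(w - FG n - FH n)
    abel
  rw [hgoal, norm_neg]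
  refine hnorm.trans (pow_le_pow_of_le_one hc0 hc1 ?_)
  omega
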